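/- Convergence of the total human population under equal movement rates: Let n ≥ 1, let M be an n×n real movement matrix (nonnegative off-diagonal entries and zero column sums), and let D = diag(d_1^H, …, d_n^H) with d_i^H > 0 for all i. Then the matrix D − M is invertible. Moreover, for any constant vector c ∈ ℝ^n, every differentiable function N : [0,∞) → ℝ^n satisfying N'(t) = c − (D − M) N(t) for all t ≥ 0 converges as t → ∞ to (D − M)^{-1} c. -/

import Mathlib

open Filter Topology

private noncomputable def mySign (y : ℝ) : ℝ := if 0 ≤ y then 1 else -1

private lemma mySign_abs_le (y : ℝ) : |mySign y| ≤ 1 := by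
  unfold mySign; split <;> simp

private lemma mySign_mul (y : ℝ) : mySign y * y = |y| := by
  unfold mySign; split
  · rw [one_mul, abs_of_nonneg ‹_›]
  · rw [neg_one_mul, abs_of_neg (lt_of_not_ge ‹_›)]

private lemma mySign_eq_sign {y : ℝ} (hy : y ≠ 0) : (SignType.sign y : ℝ) = mySign y := by
  rcases hy.lt_or_gt with h | h
  · simp [mySign, h, not_le.2 h]
  · simp [mySign, h, h.le]

/-- A matrix with nonpositive off-diagonal entries and positive column sums is invertible. -/
private lemma colsum_isUnit {n : ℕ} (hn : 1 ≤ n) (A : Matrix (Fin n) (Fin n) ℝ)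
    (hoff : ∀ i j, i ≠ j → A i j ≤ 0) (hcol : ∀ j, 0 < ∑ i, A i j) :
    IsUnit A := by
  haveI : Nonempty (Fin n) := ⟨⟨0, hn⟩⟩
  rw [← Matrix.vecMul_injective_iff_isUnit]
  have key : ∀ v : Fin n → ℝ, Matrix.vecMul v A = 0 → v = 0 := by
    intro v hv
    by_contra hne
    obtain ⟨j, -, hj⟩ := Finset.exists_max_image Finset.univ (fun i => |v i|) Finset.univ_nonempty
    have hvj : 0 < |v j| := by
      rcases Function.ne_iff.1 hne with ⟨i, hi⟩
      exact lt_of_lt_of_le (abs_pos.2 (by simpa using hi)) (hj i (Finset.mem_univ i))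
    have hAjj : 0 ≤ A j j := by
      have h1 : ∑ i ∈ Finset.univ.erase j, A i j ≤ 0 :=
        Finset.sum_nonpos fun i hi => hoff i j (Finset.ne_of_mem_erase hi)
      have h2 : A j j + ∑ i ∈ Finset.univ.erase j, A i j = ∑ i, A i j :=
        Finset.add_sum_erase _ (fun i => A i j) (Finset.mem_univ j)
      have := hcol j
      linarith
    have h0 : ∑ i, v i * A i j = 0 := by
      have := congrFun hv j
      simpa [Matrix.vecMul, dotProduct] using this
    have hsplit : v j * A j j + ∑ i ∈ Finset.univ.erase j, v i * A i j = 0 := by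
      rw [Finset.add_sum_erase _ (fun i => v i * A i j) (Finset.mem_univ j)]; exact h0
    have habs : |v j| * A j j ≤ ∑ i ∈ Finset.univ.erase j, |v j| * (-A i j) := by
      have h2 : v j * A j j = -∑ i ∈ Finset.univ.erase j, v i * A i j := by linarith
      calc |v j| * A j j = |v j * A j j| := by rw [abs_mul, abs_of_nonneg hAjj]
        _ = |∑ i ∈ Finset.univ.erase j, v i * A i j| := by rw [h2, abs_neg]
        _ ≤ ∑ i ∈ Finset.univ.erase j, |v i * A i j| := Finset.abs_sum_le_sum_abs _ _
        _ ≤ ∑ i ∈ Finset.univ.erase j, |v j| * (-A i j) := by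
            apply Finset.sum_le_sum
            intro i hi
            rw [abs_mul, abs_of_nonpos (hoff i j (Finset.ne_of_mem_erase hi))]
            exact mul_le_mul_of_nonneg_right (hj i (Finset.mem_univ i)) (neg_nonneg.2 (hoff i j (Finset.ne_of_mem_erase hi)))
    have hcs : (∑ i, A i j) * |v j| ≤ 0 := by
      have h2 : A j j + ∑ i ∈ Finset.univ.erase j, A i j = ∑ i, A i j :=
        Finset.add_sum_erase _ (fun i => A i j) (Finset.mem_univ j)
      have h3 : (∑ i ∈ Finset.univ.erase j, A i j) * |v j|
          = -∑ i ∈ Finset.univ.erase j, |v j| * (-A i j) := by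
        rw [Finset.sum_mul, ← Finset.sum_neg_distrib]
        exact Finset.sum_congr rfl fun i _ => by ring
      calc (∑ i, A i j) * |v j|
          = A j j * |v j| + (∑ i ∈ Finset.univ.erase j, A i j) * |v j| := by
            rw [← h2]; ring
        _ ≤ (∑ i ∈ Finset.univ.erase j, |v j| * (-A i j))
            + (∑ i ∈ Finset.univ.erase j, A i j) * |v j| := by
            have := habs; linarith [mul_comm (|v j|) (A j j)]
        _ = 0 := by rw [h3]; ring
    nlinarith [mul_pos (hcol j) hvj]
  intro a b hab
  have hz : Matrix.vecMul (a - b) A = 0 := by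
    rw [Matrix.sub_vecMul]
    simp only at hab
    rw [hab, sub_self]
  have := key (a - b) hz
  exact sub_eq_zero.1 this

/-- Convergence of the total human population under equal movement rates:
`D - M` is invertible and every solution of `N' = c - (D - M) N` converges
to `(D - M)⁻¹ c`. -/
theorem cholera_total_population_convergence
    (n : ℕ) (hn : 1 ≤ n)
    (M : Matrix (Fin n) (Fin n) ℝ)
    (hMoff : ∀ i j, i ≠ j → 0 ≤ M i j) (hMcol : ∀ j, ∑ i, M i j = 0)
    (dH : Fin n → ℝ) (hdH : ∀ i, 0 < dH i)
    (c : Fin n → ℝ) :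
    IsUnit (Matrix.diagonal dH - M) ∧
    ∀ N : ℝ → Fin n → ℝ,
      (∀ t, 0 ≤ t → ∀ i, HasDerivWithinAt (fun τ => N τ i)
        (c i - ((Matrix.diagonal dH - M).mulVec (N t)) i) (Set.Ici (0:ℝ)) t) →
      Tendsto N atTop (nhds ((Matrix.diagonal dH - M)⁻¹.mulVec c)) := by
  haveI : Nonempty (Fin n) := ⟨⟨0, hn⟩⟩
  set A : Matrix (Fin n) (Fin n) ℝ := Matrix.diagonal dH - M with hAdef
  have hAoff : ∀ i j, i ≠ j → A i j ≤ 0 := by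
    intro i j hij
    simp only [hAdef, Matrix.sub_apply, Matrix.diagonal_apply_ne _ hij]
    linarith [hMoff i j hij]
  have hAcol : ∀ j, ∑ i, A i j = dH j := by
    intro j
    simp only [hAdef, Matrix.sub_apply, Finset.sum_sub_distrib, hMcol j, sub_zero]
    simp [Matrix.diagonal_apply]
  have hU : IsUnit A := colsum_isUnit hn A hAoff (fun j => by rw [hAcol]; exact hdH j)
  refine ⟨hU, ?_⟩
  intro N hN
  set Ns : Fin n → ℝ := A⁻¹.mulVec c with hNsdef
  have hAc : A.mulVec Ns = c := by
    rw [hNsdef, Matrix.mulVec_mulVec,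
      Matrix.mul_nonsing_inv _ (A.isUnit_iff_isUnit_det.1 hU), Matrix.one_mulVec]
  set x : ℝ → Fin n → ℝ := fun t i => N t i - Ns i with hxdef
  set v : ℝ → Fin n → ℝ := fun t => -(A.mulVec (x t)) with hvdef
  have hx : ∀ t, 0 ≤ t → ∀ i, HasDerivWithinAt (fun τ => x τ i) (v t i) (Set.Ici 0) t := by
    intro t ht i
    have h1 := (hN t ht i).sub_const (Ns i)
    convert h1 using 1
    · rfl
    · rfl
    have hxt : x t = N t - Ns := rfl
    simp only [hvdef, Pi.neg_apply]
    rw [hxt, Matrix.mulVec_sub, hAc, Pi.sub_apply]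
    ring
  set s : ℝ → Fin n → ℝ :=
    fun t i => if x t i = 0 then mySign (v t i) else mySign (x t i) with hsdef
  set f : ℝ → ℝ := fun t => ∑ i, |x t i| with hfdef
  set F : ℝ → ℝ := fun t => ∑ i, s t i * v t i with hFdef
  have hs_le : ∀ t i, |s t i| ≤ 1 := by
    intro t i
    simp only [hsdef]
    split <;> exact mySign_abs_le _
  have hs_mul : ∀ t i, s t i * x t i = |x t i| := by
    intro t i
    by_cases h : x t i = 0
    · simp [hsdef, h]
    · simp [hsdef, h, mySign_mul]
  -- continuity of f on [0, ∞)
  have hxc : ∀ i, ContinuousOn (fun τ => x τ i) (Set.Ici (0:ℝ)) :=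
    fun i t ht => (hx t ht i).continuousWithinAt
  have hfc : ContinuousOn f (Set.Ici (0:ℝ)) := by
    apply continuousOn_finset_sum
    intro i _
    exact (hxc i).abs
  -- the difference quotient of f tends to F from the right
  have hslope : ∀ t, 0 ≤ t →
      Tendsto (fun z => (z - t)⁻¹ * (f z - f t)) (𝓝[>] t) (𝓝 (F t)) := by
    intro t ht
    have hsub : 𝓝[>] t ≤ 𝓝[Set.Ici (0:ℝ) \ {t}] t :=
      nhdsWithin_mono t (fun z hz => ⟨le_trans ht (le_of_lt hz), ne_of_gt hz⟩)
    have hterm : ∀ i, Tendsto (fun z => (z - t)⁻¹ * (|x z i| - |x t i|)) (𝓝[>] t)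
        (𝓝 (s t i * v t i)) := by
      intro i
      by_cases h0 : x t i = 0
      · have hsl : Tendsto (fun z => (z - t)⁻¹ * (x z i - x t i)) (𝓝[>] t) (𝓝 (v t i)) := by
          have h1 := (hasDerivWithinAt_iff_tendsto_slope.1 (hx t ht i)).mono_left hsub
          refine h1.congr fun z => ?_
          rw [slope_def_field, div_eq_inv_mul]
        have habs := hsl.abs
        have hEq : ∀ᶠ z in 𝓝[>] t,
            |(z - t)⁻¹ * (x z i - x t i)| = (z - t)⁻¹ * (|x z i| - |x t i|) := by
          filter_upwards [self_mem_nhdsWithin] with z hz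
          have hpos : (0:ℝ) < (z - t)⁻¹ := inv_pos.2 (sub_pos.2 hz)
          rw [h0, abs_zero, sub_zero, sub_zero, abs_mul, abs_of_pos hpos]
        have hlim : s t i * v t i = |v t i| := by
          simp [hsdef, h0, mySign_mul]
        rw [hlim]
        exact habs.congr' hEq
      · have habs : HasDerivWithinAt (fun z => |x z i|)
            ((SignType.sign (x t i) : ℝ) * v t i) (Set.Ici 0) t :=
          HasDerivAt.comp_hasDerivWithinAt (h₂ := fun z => |z|) t (hasDerivAt_abs h0) (hx t ht i)
        have h1 := (hasDerivWithinAt_iff_tendsto_slope.1 habs).mono_left hsub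
        have hlim : (SignType.sign (x t i) : ℝ) * v t i = s t i * v t i := by
          rw [mySign_eq_sign h0]
          simp [hsdef, h0]
        rw [← hlim]
        refine h1.congr fun z => ?_
        rw [slope_def_field, div_eq_inv_mul]
    refine (tendsto_finset_sum Finset.univ (fun i _ => hterm i)).congr fun z => ?_
    simp only [hfdef]
    rw [← Finset.sum_sub_distrib, Finset.mul_sum]
  -- the decay bound F t ≤ K * f t
  obtain ⟨i0, -, hi0⟩ := Finset.exists_min_image Finset.univ dH Finset.univ_nonempty
  set K : ℝ := -dH i0 with hKdef
  have hKneg : K < 0 := neg_neg_iff_pos.2 (hdH i0)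
  have hbound : ∀ t, F t ≤ K * f t := by
    intro t
    have hper : ∀ j, dH i0 * |x t j| ≤ ∑ i, s t i * A i j * x t j := by
      intro j
      have hmain : ∑ i, A i j * |x t j| ≤ ∑ i, s t i * A i j * x t j := by
        apply Finset.sum_le_sum
        intro i _
        by_cases hij : i = j
        · subst hij
          have h := hs_mul t i
          have : A i i * |x t i| = s t i * A i i * x t i := by rw [← h]; ring
          exact le_of_eq this
        · have h2 : |s t i * A i j * x t j| ≤ |A i j| * |x t j| := by
            rw [abs_mul, abs_mul]
            have h2a := mul_le_mul_of_nonneg_right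
              (mul_le_mul_of_nonneg_right (hs_le t i) (abs_nonneg (A i j)))
              (abs_nonneg (x t j))
            rw [one_mul] at h2a
            exact h2a
          have h3 : -(|A i j| * |x t j|) = A i j * |x t j| := by
            rw [abs_of_nonpos (hAoff i j hij)]; ring
          have h4 := neg_abs_le (s t i * A i j * x t j)
          linarith
      have hsumeq : ∑ i, A i j * |x t j| = dH j * |x t j| := by
        rw [← Finset.sum_mul, hAcol]
      have h5 : dH i0 * |x t j| ≤ dH j * |x t j| :=
        mul_le_mul_of_nonneg_right (hi0 j (Finset.mem_univ j)) (abs_nonneg _)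
      linarith
    have hF : F t = ∑ j, -(∑ i, s t i * A i j * x t j) := by
      calc F t = ∑ i, ∑ j, -(s t i * A i j * x t j) := by
            apply Finset.sum_congr rfl
            intro i _
            simp only [hvdef, Pi.neg_apply, Matrix.mulVec, dotProduct]
            rw [mul_neg, Finset.mul_sum, ← Finset.sum_neg_distrib]
            exact Finset.sum_congr rfl fun j _ => by ring
        _ = ∑ j, ∑ i, -(s t i * A i j * x t j) := Finset.sum_comm
        _ = ∑ j, -(∑ i, s t i * A i j * x t j) := by
            exact Finset.sum_congr rfl fun j _ => Finset.sum_neg_distrib _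
    rw [hF]
    calc ∑ j, -(∑ i, s t i * A i j * x t j) ≤ ∑ j, K * |x t j| := by
          apply Finset.sum_le_sum
          intro j _
          have := hper j
          simp only [hKdef]
          linarith
      _ = K * f t := by simp only [hfdef]; rw [Finset.mul_sum]
  -- Grönwall
  have hgron : ∀ t, 0 ≤ t → f t ≤ f 0 * Real.exp (K * t) := by
    intro t ht
    have hmain := le_gronwallBound_of_liminf_deriv_right_le
      (f := f) (f' := F) (δ := f 0) (K := K) (ε := 0) (a := 0) (b := t)
      (hfc.mono (Set.Icc_subset_Ici_self))
      (by
        intro z hz r hr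
        exact (((hslope z hz.1).eventually_lt_const hr)).frequently)
      le_rfl
      (fun z _ => by simpa using hbound z)
      t ⟨ht, le_rfl⟩
    rwa [sub_zero, gronwallBound_ε0] at hmain
  -- conclusion
  have hf0 : Tendsto f atTop (𝓝 0) := by
    have hupper : Tendsto (fun t => f 0 * Real.exp (K * t)) atTop (𝓝 0) := by
      have h1 : Tendsto (fun t : ℝ => K * t) atTop atBot :=
        Tendsto.const_mul_atTop_of_neg hKneg tendsto_id
      have h2 : Tendsto (fun t : ℝ => Real.exp (K * t)) atTop (𝓝 0) :=
        Real.tendsto_exp_atBot.comp h1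
      simpa using h2.const_mul (f 0)
    refine tendsto_of_tendsto_of_tendsto_of_le_of_le' tendsto_const_nhds hupper ?_ ?_
    · exact Eventually.of_forall fun t => Finset.sum_nonneg fun i _ => abs_nonneg _
    · filter_upwards [eventually_ge_atTop (0:ℝ)] with t ht using hgron t ht
  rw [tendsto_pi_nhds]
  intro i
  have hle : ∀ t, |x t i| ≤ f t := fun t =>
    Finset.single_le_sum (f := fun j => |x t j|) (fun j _ => abs_nonneg _) (Finset.mem_univ i)
  have hxi : Tendsto (fun t => x t i) atTop (𝓝 0) :=
    tendsto_of_tendsto_of_tendsto_of_le_of_le (by simpa using hf0.neg) hf0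
      (fun t => neg_le_of_abs_le (hle t)) (fun t => le_of_abs_le (hle t))
  have hfinal : Tendsto (fun t => x t i + Ns i) atTop (𝓝 (0 + Ns i)) :=
    hxi.add tendsto_const_nhds
  simpa [hxdef] using hfinal
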